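/- Suppose h_{t+1} = η₁ h_t + (1−η₁)G_t with h_0 = 0, v̂ satisfies v̂_{t+1} ≥ η₂ v̂_t + (1−η₂)G_t² coordinatewise with v̂_0 ≥ 0, and η₁² < η₂ < 1 with τ := η₁²/η₂. Then for every coordinate l, |h^l_{t+1}|² ≤ (1−η₂)^{−1}(1−τ)^{−1} v̂^l_{t+1}. -/

import Mathlib

theorem keylem (η₁ η₂ a b : ℝ) (hη₁0 : 0 ≤ η₁) (hη : η₁ ^ 2 < η₂) (hη₂ : η₂ < 1) :
    (η₁ * a + (1 - η₁) * b) ^ 2 ≤ η₂ * a ^ 2 + (1 - η₁ ^ 2 / η₂)⁻¹ * b ^ 2 := by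
  have hη₂0 : 0 < η₂ := lt_of_le_of_lt (sq_nonneg _) hη
  have hd : 0 < η₂ - η₁ ^ 2 := by linarith
  have h1 : η₁ < 1 := by nlinarith [sq_nonneg (η₁ - 1)]
  have hs : (1 - η₁ ^ 2 / η₂)⁻¹ = η₂ / (η₂ - η₁ ^ 2) := by
    rw [one_sub_div hη₂0.ne', inv_div]
  rw [hs]
  have hb : ((1-η₁)*b)^2 ≤ b^2 := by
    nlinarith [mul_nonneg (mul_nonneg hη₁0 (by linarith : (0:ℝ) ≤ 2 - η₁)) (sq_nonneg b)]
  have key2 : (η₂-η₁^2)*(η₁ * a + (1 - η₁) * b)^2 ≤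
      η₂*(η₂-η₁^2)*a^2 + η₂*b^2 := by
    rcases eq_or_lt_of_le hη₁0 with h0 | h0
    · rw [← h0]
      nlinarith [mul_nonneg (mul_nonneg hη₂0.le hη₂0.le) (sq_nonneg a)]
    · have h2 : 0 < η₁^2 := by positivity
      refine (mul_le_mul_iff_right₀ h2).1 ?_
      nlinarith [sq_nonneg ((η₂-η₁^2)*(η₁*a) - η₁^2*((1-η₁)*b)),
        mul_le_mul_of_nonneg_left hb (mul_pos hη₂0 h2).le]
  calc (η₁ * a + (1 - η₁) * b) ^ 2
      ≤ (η₂*(η₂-η₁^2)*a^2 + η₂*b^2)/(η₂-η₁^2) := (le_div_iff₀ hd).2 (by linarith)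
    _ = η₂ * a ^ 2 + η₂ / (η₂ - η₁ ^ 2) * b ^ 2 := by field_simp

theorem momentum_second_moment_bound (d : ℕ) (η₁ η₂ : ℝ)
    (hη₁0 : 0 ≤ η₁) (hη : η₁ ^ 2 < η₂) (hη₂ : η₂ < 1)
    (h G vhat : ℕ → Fin d → ℝ)
    (h0 : h 0 = 0)
    (hrec : ∀ t l, h (t + 1) l = η₁ * h t l + (1 - η₁) * G t l)
    (hv0 : ∀ l, 0 ≤ vhat 0 l)
    (hvrec : ∀ t l, η₂ * vhat t l + (1 - η₂) * (G t l) ^ 2 ≤ vhat (t + 1) l) :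
    ∀ t l, (h (t + 1) l) ^ 2 ≤
      (1 - η₂)⁻¹ * (1 - η₁ ^ 2 / η₂)⁻¹ * vhat (t + 1) l := by
  have hη₂0 : 0 < η₂ := lt_of_le_of_lt (sq_nonneg _) hη
  have hτ1 : η₁ ^ 2 / η₂ < 1 := (div_lt_one hη₂0).2 hη
  have hA : 0 < (1 - η₂)⁻¹ := inv_pos.2 (by linarith)
  have hB : 0 < (1 - η₁ ^ 2 / η₂)⁻¹ := inv_pos.2 (by linarith)
  set C := (1 - η₂)⁻¹ * (1 - η₁ ^ 2 / η₂)⁻¹ with hC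
  have hC0 : 0 < C := mul_pos hA hB
  have hCeq : C * (1 - η₂) = (1 - η₁ ^ 2 / η₂)⁻¹ := by
    rw [hC, mul_comm (1-η₂)⁻¹, mul_assoc, inv_mul_cancel₀ (by linarith : (1:ℝ)-η₂ ≠ 0), mul_one]
  have main : ∀ t l, 0 ≤ vhat t l ∧ (h t l) ^ 2 ≤ C * vhat t l := by
    intro t
    induction t with
    | zero => intro l; refine ⟨hv0 l, ?_⟩
              rw [h0]; simpa using mul_nonneg hC0.le (hv0 l)
    | succ t ih =>
      intro l
      obtain ⟨hv, hh⟩ := ih l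
      have hvpos : 0 ≤ vhat (t+1) l := by
        have := hvrec t l
        nlinarith [sq_nonneg (G t l)]
      refine ⟨hvpos, ?_⟩
      rw [hrec t l]
      calc (η₁ * h t l + (1 - η₁) * G t l) ^ 2
          ≤ η₂ * (h t l) ^ 2 + (1 - η₁ ^ 2 / η₂)⁻¹ * (G t l) ^ 2 :=
            keylem η₁ η₂ _ _ hη₁0 hη hη₂
        _ ≤ η₂ * (C * vhat t l) + C * (1 - η₂) * (G t l) ^ 2 := by
            rw [hCeq]
            exact add_le_add (mul_le_mul_of_nonneg_left hh hη₂0.le) le_rfl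
        _ = C * (η₂ * vhat t l + (1 - η₂) * (G t l) ^ 2) := by ring
        _ ≤ C * vhat (t+1) l := mul_le_mul_of_nonneg_left (hvrec t l) hC0.le
  intro t l
  exact (main (t+1) l).2
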